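/- (CHSY Lemma) If u₁, …, u_k are linearly independent vectors in ℝⁿ, then the dimension of the span of the set { (H u₁, H u₂, …, H u_k) ∈ (ℝⁿ)^k : H an n×n real symmetric matrix } equals kn − k(k−1)/2. Equivalently, its codimension in ℝ^{kn} is k(k−1)/2, independently of n. -/

import Mathlib

open Matrix

section Std
variable {n k : ℕ}

private def SymIdx (k n : ℕ) : Type := {p : Fin k × Fin n // (p.2:ℕ) < k → (p.1:ℕ) ≤ (p.2:ℕ)}

private instance : Fintype (SymIdx k n) := by unfold SymIdx; infer_instance

private lemma card_symIdx (hkn : k ≤ n) : Fintype.card (SymIdx k n) = k * n - k * (k-1) / 2 := by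
  have h1 : Fintype.card (SymIdx k n) =
      Fintype.card {p : Fin k × Fin n // ¬¬((p.2:ℕ) < k → (p.1:ℕ) ≤ (p.2:ℕ))} :=
    Fintype.card_congr (Equiv.subtypeEquivRight (by intro p; rw [not_not]))
  have e1 : {p : Fin k × Fin n // ¬ ((p.2:ℕ) < k → (p.1:ℕ) ≤ (p.2:ℕ))} ≃
      {q : Fin k × Fin k // (q.2:ℕ) < (q.1:ℕ)} :=
    { toFun := fun p => ⟨(p.1.1, ⟨p.1.2, by have := p.2; omega⟩), by
        show (p.1.2:ℕ) < (p.1.1:ℕ); have := p.2; omega⟩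
      invFun := fun q => ⟨(q.1.1, Fin.castLE hkn q.1.2), by
        show ¬((q.1.2:ℕ) < k → (q.1.1:ℕ) ≤ (q.1.2:ℕ)); have := q.2; have := q.1.2.2; omega⟩
      left_inv := fun p => rfl
      right_inv := fun q => rfl }
  have e2 : {q : Fin k × Fin k // (q.2:ℕ) < (q.1:ℕ)} ≃ (Σ i : Fin k, Fin i) :=
    { toFun := fun q => ⟨q.1.1, ⟨q.1.2, q.2⟩⟩
      invFun := fun s => ⟨(s.1, ⟨s.2, s.2.2.trans s.1.2⟩), s.2.2⟩
      left_inv := fun q => rfl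
      right_inv := fun s => rfl }
  rw [h1, Fintype.card_subtype_compl, Fintype.card_congr (e1.trans e2), Fintype.card_sigma]
  simp only [Fintype.card_fin, Fintype.card_prod]
  rw [Fin.sum_univ_eq_sum_range (fun i => i) k, Finset.sum_range_id]

/-- constraint map -/
private def Ψ (hkn : k ≤ n) : (Fin k → Fin n → ℝ) →ₗ[ℝ] (Fin k × Fin k → ℝ) where
  toFun x := fun p => x p.1 (Fin.castLE hkn p.2) - x p.2 (Fin.castLE hkn p.1)
  map_add' x y := by funext p; simp; ring
  map_smul' c x := by funext p; simp; ring

private lemma mem_kerΨ (hkn : k ≤ n) (x : Fin k → Fin n → ℝ) :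
    x ∈ LinearMap.ker (Ψ hkn) ↔ ∀ i i' : Fin k, x i (Fin.castLE hkn i') = x i' (Fin.castLE hkn i) := by
  simp only [LinearMap.mem_ker, Ψ, LinearMap.coe_mk, AddHom.coe_mk, funext_iff]
  constructor
  · intro h i i'; have := h (i, i'); simpa [sub_eq_zero] using this
  · intro h p; simpa [sub_eq_zero] using h p.1 p.2

/-- the span set equals the kernel of Ψ -/
private lemma std_set_eq (hkn : k ≤ n) :
    {x : Fin k → Fin n → ℝ |
        ∃ H : Matrix (Fin n) (Fin n) ℝ, H.IsSymm ∧ x = fun i => H *ᵥ Pi.single (Fin.castLE hkn i) (1:ℝ)} =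
      ↑(LinearMap.ker (Ψ hkn)) := by
  ext x
  simp only [Set.mem_setOf_eq, SetLike.mem_coe, mem_kerΨ]
  constructor
  · rintro ⟨H, hH, rfl⟩ i i'
    simp only [mulVec_single_one, col_apply]
    exact hH.apply _ _
  · intro hx
    refine ⟨fun j l => if h : (l:ℕ) < k then x ⟨l, h⟩ j else if h' : (j:ℕ) < k then x ⟨j, h'⟩ l else 0, ?_, ?_⟩
    · ext j l
      show (if h : (j:ℕ) < k then x ⟨j, h⟩ l else if h' : (l:ℕ) < k then x ⟨l, h'⟩ j else 0) = _
      rcases lt_or_ge (j:ℕ) k with hj | hj <;> rcases lt_or_ge (l:ℕ) k with hl | hl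
      · rw [dif_pos hj, dif_pos hl]
        exact hx ⟨j, hj⟩ ⟨l, hl⟩
      · rw [dif_pos hj, dif_neg (not_lt.2 hl), dif_pos hj]
      · rw [dif_neg (not_lt.2 hj), dif_pos hl, dif_pos hl]
      · rw [dif_neg (not_lt.2 hj), dif_neg (not_lt.2 hl), dif_neg (not_lt.2 hl), dif_neg (not_lt.2 hj)]
    · funext i j
      simp only [mulVec, dotProduct, Pi.single_apply, mul_ite, mul_one, mul_zero,
        Finset.sum_ite_eq, Finset.sum_ite_eq', Finset.mem_univ, if_true]
      rw [dif_pos (show ((Fin.castLE hkn i : Fin n):ℕ) < k from i.2)]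
      rfl

/-- equivalence of the kernel with functions on SymIdx -/
private noncomputable def kerEquiv (hkn : k ≤ n) : (LinearMap.ker (Ψ hkn)) ≃ₗ[ℝ] (SymIdx k n → ℝ) where
  toFun x := fun p => x.1 p.1.1 p.1.2
  map_add' x y := rfl
  map_smul' c x := rfl
  invFun f := ⟨fun i j =>
      if h : (j:ℕ) < k ∧ (j:ℕ) < (i:ℕ) then
        f ⟨(⟨j, h.1⟩, Fin.castLE hkn i), fun _ => le_of_lt h.2⟩
      else f ⟨(i, j), fun hjk => le_of_not_gt (fun hji => h ⟨hjk, hji⟩)⟩, by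
    rw [mem_kerΨ]
    intro a b
    rcases lt_trichotomy (a:ℕ) (b:ℕ) with h | h | h
    · rw [dif_neg (fun hc => Nat.lt_asymm h hc.2), dif_pos ⟨a.2, h⟩]; rfl
    · have hab : a = b := Fin.ext h
      subst hab
      rw [dif_neg (fun hc => lt_irrefl (a:ℕ) hc.2)]
    · rw [dif_pos ⟨b.2, h⟩, dif_neg (fun hc => Nat.lt_asymm h hc.2)]; rfl⟩
  left_inv := by
    rintro ⟨x, hx⟩
    rw [mem_kerΨ] at hx
    apply Subtype.ext
    funext i j
    simp only
    split_ifs with h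
    · exact hx ⟨j, h.1⟩ i
    · rfl
  right_inv := by
    intro f
    funext p
    simp only
    rw [dif_neg (fun hc => absurd (p.2 hc.1) (not_le.2 hc.2))]
    rfl

private theorem chsy_std (hkn : k ≤ n) :
    Module.finrank ℝ (Submodule.span ℝ
      {x : Fin k → Fin n → ℝ |
        ∃ H : Matrix (Fin n) (Fin n) ℝ, H.IsSymm ∧ x = fun i => H *ᵥ Pi.single (Fin.castLE hkn i) (1:ℝ)}) =
      k * n - k * (k - 1) / 2 := by
  rw [std_set_eq hkn, Submodule.span_eq, (kerEquiv hkn).finrank_eq, Module.finrank_pi, card_symIdx hkn]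


end Std

/-- **CHSY Lemma.** If `u₁, …, u_k` are linearly independent vectors in `ℝⁿ`, then the
span of `{(H u₁, …, H u_k) : H symmetric n × n}` inside `ℝ^{kn}` has dimension
`k n − k (k − 1) / 2`. -/
theorem chsy_lemma {n k : ℕ} (u : Fin k → (Fin n → ℝ))
    (hu : LinearIndependent ℝ u) :
    Module.finrank ℝ (Submodule.span ℝ
      {x : Fin k → Fin n → ℝ |
        ∃ H : Matrix (Fin n) (Fin n) ℝ, H.IsSymm ∧ x = fun i => H *ᵥ u i}) =
      k * n - k * (k - 1) / 2 := by
  classical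
  -- k ≤ n
  have hkn : k ≤ n := by
    have h1 := hu.fintype_card_le_finrank
    simpa [Module.finrank_pi] using h1
  -- build a basis of ℝⁿ extending u
  set U : Submodule ℝ (Fin n → ℝ) := Submodule.span ℝ (Set.range u) with hU
  obtain ⟨Wc, hc⟩ := Submodule.exists_isCompl U
  set m := Module.finrank ℝ Wc with hm
  set c : Module.Basis (Fin m) ℝ Wc := Module.finBasis ℝ Wc with hcb
  set g : Fin m → (Fin n → ℝ) := fun j => (c j : Fin n → ℝ) with hg
  have hspan_g : Submodule.span ℝ (Set.range g) = Wc := by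
    have : Set.range g = Wc.subtype '' Set.range c := by
      rw [← Set.range_comp]; rfl
    rw [this, Submodule.span_image, Module.Basis.span_eq, Submodule.map_subtype_top]
  have hli : LinearIndependent ℝ (Sum.elim u g) := by
    refine hu.sum_type ?_ ?_
    · exact (c.linearIndependent.map' Wc.subtype (Submodule.ker_subtype Wc))
    · rw [hspan_g, ← hU]; exact hc.disjoint
  have hsp : ⊤ ≤ Submodule.span ℝ (Set.range (Sum.elim u g)) := by
    rw [Set.Sum.elim_range, Submodule.span_union, hspan_g, ← hU]
    exact hc.codisjoint.eq_top.ge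
  have hkm : k + m = n := by
    have h2 := Submodule.finrank_add_eq_of_isCompl hc
    have h3 : Module.finrank ℝ U = k := by
      rw [hU, finrank_span_eq_card hu, Fintype.card_fin]
    rw [h3, Module.finrank_pi, Fintype.card_fin] at h2
    omega
  let e : (Fin k ⊕ Fin m) ≃ Fin n := finSumFinEquiv.trans (finCongr hkm)
  let v : Module.Basis (Fin n) ℝ (Fin n → ℝ) := (Module.Basis.mk hli hsp).reindex e
  have hv : ∀ i : Fin k, v (Fin.castLE hkn i) = u i := by
    intro i
    have he : e (Sum.inl i) = Fin.castLE hkn i := by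
      apply Fin.ext; simp [e]
    have : v (Fin.castLE hkn i) = (Module.Basis.mk hli hsp) (Sum.inl i) := by
      rw [Module.Basis.reindex_apply, ← he, Equiv.symm_apply_apply]
    rw [this, Module.Basis.coe_mk]
    rfl
  -- the change-of-basis matrix
  set Q : Matrix (Fin n) (Fin n) ℝ := (Pi.basisFun ℝ (Fin n)).toMatrix ⇑v with hQ
  haveI : Invertible Q := (Pi.basisFun ℝ (Fin n)).invertibleToMatrix v
  have hQapp : ∀ j l, Q j l = v l j := by
    intro j l
    rw [hQ, Module.Basis.toMatrix_apply, Pi.basisFun_repr]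
  have hQu : ∀ i : Fin k, Q *ᵥ Pi.single (Fin.castLE hkn i) (1:ℝ) = u i := by
    intro i
    funext j
    simp only [mulVec_single_one, col_apply]
    rw [hQapp, hv]
  have hQinv : Q⁻¹ * Q = 1 := Matrix.inv_mul_of_invertible Q
  have hQinv' : Q * Q⁻¹ = 1 := Matrix.mul_inv_of_invertible Q
  have hT1 : (Q⁻¹)ᵀ * Qᵀ = 1 := by rw [← transpose_mul, hQinv', transpose_one]
  have hT2 : Qᵀ * (Q⁻¹)ᵀ = 1 := by rw [← transpose_mul, hQinv, transpose_one]
  -- linear equivalence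
  let E : (Fin k → Fin n → ℝ) ≃ₗ[ℝ] (Fin k → Fin n → ℝ) :=
    { toFun := fun x i => (Q⁻¹)ᵀ *ᵥ x i
      invFun := fun x i => Qᵀ *ᵥ x i
      map_add' := fun x y => by funext i; simp [mulVec_add]
      map_smul' := fun r x => by funext i; simp [mulVec_smul]
      left_inv := fun x => by
        funext i
        show Qᵀ *ᵥ ((Q⁻¹)ᵀ *ᵥ x i) = x i
        rw [mulVec_mulVec, hT2, one_mulVec]
      right_inv := fun x => by
        funext i
        show (Q⁻¹)ᵀ *ᵥ (Qᵀ *ᵥ x i) = x i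
        rw [mulVec_mulVec, hT1, one_mulVec] }
  -- set equality
  have hset : {x : Fin k → Fin n → ℝ |
        ∃ H : Matrix (Fin n) (Fin n) ℝ, H.IsSymm ∧ x = fun i => H *ᵥ u i} =
      ⇑E '' {x : Fin k → Fin n → ℝ |
        ∃ H : Matrix (Fin n) (Fin n) ℝ, H.IsSymm ∧
          x = fun i => H *ᵥ Pi.single (Fin.castLE hkn i) (1:ℝ)} := by
    ext x
    simp only [Set.mem_setOf_eq, Set.mem_image]
    constructor
    · rintro ⟨H, hH, rfl⟩
      refine ⟨fun i => (Qᵀ * H * Q) *ᵥ Pi.single (Fin.castLE hkn i) (1:ℝ), ⟨Qᵀ * H * Q, ?_, rfl⟩, ?_⟩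
      · unfold Matrix.IsSymm
        rw [transpose_mul, transpose_mul, transpose_transpose, hH.eq, Matrix.mul_assoc]
      · funext i
        show (Q⁻¹)ᵀ *ᵥ ((Qᵀ * H * Q) *ᵥ _) = H *ᵥ u i
        rw [mulVec_mulVec, ← Matrix.mul_assoc, ← Matrix.mul_assoc, hT1, Matrix.one_mul,
          ← mulVec_mulVec, hQu]
    · rintro ⟨_, ⟨H', hH', rfl⟩, rfl⟩
      refine ⟨(Q⁻¹)ᵀ * H' * Q⁻¹, ?_, ?_⟩
      · unfold Matrix.IsSymm
        rw [transpose_mul, transpose_mul, transpose_transpose, hH'.eq, Matrix.mul_assoc]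
      · funext i
        show (Q⁻¹)ᵀ *ᵥ (H' *ᵥ Pi.single (Fin.castLE hkn i) (1:ℝ)) =
          ((Q⁻¹)ᵀ * H' * Q⁻¹) *ᵥ u i
        rw [← hQu i, mulVec_mulVec, mulVec_mulVec, Matrix.mul_assoc ((Q⁻¹)ᵀ * H') Q⁻¹ Q,
          hQinv, Matrix.mul_one]
  rw [hset, Submodule.span_image_linearEquiv]
  exact (LinearEquiv.finrank_map_eq E _).trans (chsy_std hkn)
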